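/- For every n : ℕ, the following identity of natural numbers holds: ∏_{i=1}^{n} 2^{i−1}·(2^i − 1) = ∏_{i=1}^{n} (2^n − 2^{i−1}). -/

import Mathlib

open scoped BigOperators

theorem stmt17 (n : ℕ) :
    ∏ i ∈ Finset.Icc 1 n, 2 ^ (i - 1) * (2 ^ i - 1) =
      ∏ i ∈ Finset.Icc 1 n, (2 ^ n - 2 ^ (i - 1)) := by
  have h1 : ∀ i ∈ Finset.Icc 1 n,
      2 ^ n - 2 ^ (i - 1) = 2 ^ (i - 1) * (2 ^ (n + 1 - i) - 1) := by
    intro i hi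
    simp only [Finset.mem_Icc] at hi
    rw [Nat.mul_sub, mul_one, ← pow_add]
    have h : i - 1 + (n + 1 - i) = n := by omega
    rw [h]
  rw [Finset.prod_congr rfl h1, Finset.prod_mul_distrib, Finset.prod_mul_distrib]
  congr 1
  refine Finset.prod_nbij' (fun i => n + 1 - i) (fun i => n + 1 - i) ?_ ?_ ?_ ?_ ?_
  · intro i hi; simp only [Finset.mem_Icc] at *; omega
  · intro i hi; simp only [Finset.mem_Icc] at *; omega
  · intro i hi; simp only [Finset.mem_Icc] at *; omega
  · intro i hi; simp only [Finset.mem_Icc] at *; omega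
  · intro i hi
    simp only [Finset.mem_Icc] at hi
    have h : n + 1 - (n + 1 - i) = i := by omega
    simp only [h]
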